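/- Let G be a torsion-free group acting by homeomorphisms, properly discontinuously and cocompactly, on a locally compact, connected, locally connected, separable metrizable space C. Then there exists a G-invariant metric d on C that induces the topology of C, i.e. d(g • x, g • y) = d(x, y) for all g ∈ G and x, y ∈ C, and the metric topology of d coincides with the topology of C. -/

import Mathlib

open Metric Set NNReal


open Pointwise

section Aux
variable {G C : Type*} [Group G] [MetricSpace C] [MulAction G C]

private lemma aux_cthick_step {K : Set C} {ρ δ : ℝ} (hρ : 0 ≤ ρ) (hδ : 0 ≤ δ)
    {u v : C} (hu : u ∈ cthickening ρ K) (huv : dist u v ≤ δ) :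
    v ∈ cthickening (ρ + δ) K := by
  rw [mem_cthickening_iff] at hu ⊢
  calc EMetric.infEdist v K ≤ EMetric.infEdist u K + edist v u :=
        EMetric.infEdist_le_infEdist_add_edist
    _ ≤ ENNReal.ofReal ρ + ENNReal.ofReal δ := by
        refine add_le_add hu ?_
        rw [edist_dist, dist_comm]
        exact ENNReal.ofReal_le_ofReal huv
    _ = ENNReal.ofReal (ρ + δ) := (ENNReal.ofReal_add hρ hδ).symm

variable (G) in
private def auxV (K : Set C) (r₀ ε : ℝ) : Set (C × C) :=
  {p | (p.1 ∈ cthickening (2*ε) K ∨ p.2 ∈ cthickening (2*ε) K) ∧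
    ∀ h : G, (h • p.1 ∈ cthickening (r₀ - 2*ε) K ∨ h • p.2 ∈ cthickening (r₀ - 2*ε) K) →
      dist (h • p.1) (h • p.2) < ε}

variable (G) in
private def auxW (K : Set C) (r₀ ε : ℝ) : Set (C × C) :=
  ⋃ g : G, (fun p : C × C => (g • p.1, g • p.2)) '' auxV G K r₀ ε

private lemma mem_auxW {K : Set C} {r₀ ε : ℝ} {x y : C} :
    (x, y) ∈ auxW G K r₀ ε ↔ ∃ g : G, (g⁻¹ • x, g⁻¹ • y) ∈ auxV G K r₀ ε := by
  simp only [auxW, mem_iUnion, mem_image, Prod.ext_iff]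
  constructor
  · rintro ⟨g, ⟨a, b⟩, hab, ha, hb⟩
    refine ⟨g, ?_⟩
    simpa [← ha, ← hb] using hab
  · rintro ⟨g, h⟩
    exact ⟨g, (g⁻¹ • x, g⁻¹ • y), h, by simp, by simp⟩

private lemma auxW_mem_nhds [LocallyCompactSpace C] {K K₃ : Set C} {r₀ ε : ℝ} (hK₃ : IsCompact K₃)
    (hcont : ∀ g : G, Continuous fun c : C => g • c)
    (hpd : ∀ A B : Set C, IsCompact A → IsCompact B → {g : G | (g • A) ∩ B ≠ ∅}.Finite)
    (hsub : cthickening r₀ K ⊆ K₃)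
    (hε : 0 < ε) (hε' : 4*ε ≤ r₀) {x : C} {g : G} {k : C} (hk : k ∈ K) (hgk : g • k = x) :
    {y | (x, y) ∈ auxW G K r₀ ε} ∈ nhds x := by
  obtain ⟨Q, hQc, hQn⟩ := exists_compact_mem_nhds k
  have hkQ : k ∈ Q := mem_of_mem_nhds hQn
  set F : Set G := {h : G | (h • Q) ∩ K₃ ≠ ∅} with hF
  have hFfin : F.Finite := hpd Q K₃ hQc hK₃
  have hN : (Q ∩ ⋂ h ∈ F, (fun b => h • b) ⁻¹' ball (h • k) ε) ∈ nhds k := by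
    refine Filter.inter_mem hQn ((Filter.biInter_mem hFfin).2 fun h _ => ?_)
    exact (hcont h).continuousAt.preimage_mem_nhds (ball_mem_nhds _ hε)
  have hVsub : (Q ∩ ⋂ h ∈ F, (fun b => h • b) ⁻¹' ball (h • k) ε) ⊆
      {b | (k, b) ∈ auxV G K r₀ ε} := by
    rintro b ⟨hbQ, hbI⟩
    have hmemF : ∀ h : G, (h • k ∈ cthickening (r₀ - 2*ε) K ∨
        h • b ∈ cthickening (r₀ - 2*ε) K) → h ∈ F := by
      intro h hh
      rw [hF, mem_setOf_eq, ← nonempty_iff_ne_empty]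
      rcases hh with h' | h'
      · exact ⟨h • k, smul_mem_smul_set hkQ, hsub (cthickening_mono (by linarith) K h')⟩
      · exact ⟨h • b, smul_mem_smul_set hbQ, hsub (cthickening_mono (by linarith) K h')⟩
    refine ⟨Or.inl (self_subset_cthickening K hk), fun h hh => ?_⟩
    have := mem_iInter₂.1 hbI h (hmemF h hh)
    simpa [dist_comm] using this
  have hpre : (fun y => g⁻¹ • y) ⁻¹' {b | (k, b) ∈ auxV G K r₀ ε} ⊆
      {y | (x, y) ∈ auxW G K r₀ ε} := by
    intro y hy
    refine mem_auxW.2 ⟨g, ?_⟩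
    have : g⁻¹ • x = k := by rw [← hgk, inv_smul_smul]
    rw [this]
    exact hy
  refine Filter.mem_of_superset ?_ hpre
  refine (hcont g⁻¹).continuousAt.preimage_mem_nhds ?_
  have : g⁻¹ • x = k := by rw [← hgk, inv_smul_smul]
  rw [this]
  exact Filter.mem_of_superset hN hVsub

private lemma auxW_shrink {K K₃ : Set C} {r₀ : ℝ} (hK₃ : IsCompact K₃)
    (hcont : ∀ g : G, Continuous fun c : C => g • c)
    (hpd : ∀ A B : Set C, IsCompact A → IsCompact B → {g : G | (g • A) ∩ B ≠ ∅}.Finite)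
    (hsub : cthickening r₀ K ⊆ K₃) (hr₀ : 0 < r₀)
    {x : C} {S : Set C} (hS : S ∈ nhds x) :
    ∃ εb > 0, ∀ ε : ℝ, 0 < ε → ε ≤ εb → {y | (x, y) ∈ auxW G K r₀ ε} ⊆ S := by
  set F : Set G := {g : G | (g • K₃) ∩ {x} ≠ ∅} with hF
  have hFfin : F.Finite := hpd K₃ {x} hK₃ isCompact_singleton
  have hsel : ∀ g : G, ∃ e : ℝ, 0 < e ∧ ∀ b : C, dist b (g⁻¹ • x) < e → g • b ∈ S := by
    intro g
    have hx : g • (g⁻¹ • x) = x := smul_inv_smul g x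
    have : (fun b => g • b) ⁻¹' S ∈ nhds (g⁻¹ • x) :=
      (hcont g).continuousAt.preimage_mem_nhds (by rwa [hx])
    obtain ⟨e, he, hesub⟩ := Metric.mem_nhds_iff.1 this
    exact ⟨e, he, fun b hb => hesub hb⟩
  choose e he hespec using hsel
  set Ft : Finset ℝ := insert (r₀/4) (hFfin.toFinset.image e) with hFt
  have hFtne : Ft.Nonempty := ⟨r₀/4, Finset.mem_insert_self _ _⟩
  refine ⟨Ft.min' hFtne, ?_, ?_⟩
  · show (0:ℝ) < Ft.min' hFtne
    rw [Finset.lt_min'_iff]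
    intro b hb
    rw [hFt, Finset.mem_insert] at hb
    rcases hb with rfl | hb
    · linarith
    · obtain ⟨g, _, rfl⟩ := Finset.mem_image.1 hb
      exact he g
  · intro ε hε hεb y hy
    have hεr : ε ≤ r₀/4 := hεb.trans (Finset.min'_le _ _ (Finset.mem_insert_self _ _))
    obtain ⟨g, hV⟩ := mem_auxW.1 hy
    have hdist : dist (g⁻¹ • x) (g⁻¹ • y) < ε := by
      have := hV.2 1 ?_
      · simpa using this
      · simp only [one_smul]
        exact hV.1.imp (fun h' => cthickening_mono (by linarith) K h')
          (fun h' => cthickening_mono (by linarith) K h')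
    have hxK₃ : g⁻¹ • x ∈ K₃ := by
      have h3 : g⁻¹ • x ∈ cthickening (2*ε + ε) K := by
        rcases hV.1 with hl | hl
        · exact cthickening_mono (by linarith) K hl
        · exact aux_cthick_step (by linarith) hε.le hl (by rw [dist_comm]; exact hdist.le)
      exact hsub (cthickening_mono (by linarith) K h3)
    have hgF : g ∈ F := by
      rw [hF, mem_setOf_eq, ← nonempty_iff_ne_empty]
      exact ⟨x, ⟨g⁻¹ • x, hxK₃, smul_inv_smul g x⟩, rfl⟩
    have hεg : ε ≤ e g := by
      refine hεb.trans (Finset.min'_le _ _ ?_)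
      exact Finset.mem_insert_of_mem (Finset.mem_image.2 ⟨g, hFfin.mem_toFinset.2 hgF, rfl⟩)
    have := hespec g (g⁻¹ • y) (by rw [dist_comm] at hdist; exact hdist.trans_le hεg)
    rwa [smul_inv_smul] at this

private lemma auxW_mono {K : Set C} {r₀ ε ε' : ℝ} (hε : ε ≤ ε') :
    auxW G K r₀ ε ⊆ auxW G K r₀ ε' := by
  refine iUnion_mono fun g => image_mono ?_
  rintro ⟨a, b⟩ ⟨hloc, htest⟩
  refine ⟨hloc.imp (fun h => cthickening_mono (by linarith) K h)
      (fun h => cthickening_mono (by linarith) K h), fun h hh => ?_⟩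
  exact lt_of_lt_of_le (htest h (hh.imp (fun h' => cthickening_mono (by linarith) K h')
    (fun h' => cthickening_mono (by linarith) K h'))) hε

private lemma auxV_symm {K : Set C} {r₀ ε : ℝ} {p : C × C} (h : p ∈ auxV G K r₀ ε) :
    (p.2, p.1) ∈ auxV G K r₀ ε :=
  ⟨h.1.symm, fun g hg => by rw [dist_comm]; exact h.2 g hg.symm⟩

private lemma auxW_symm {K : Set C} {r₀ ε : ℝ} {x y : C} (h : (x, y) ∈ auxW G K r₀ ε) :
    (y, x) ∈ auxW G K r₀ ε := by
  obtain ⟨g, hg⟩ := mem_auxW.1 h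
  exact mem_auxW.2 ⟨g, auxV_symm hg⟩

private lemma auxW_inv {K : Set C} {r₀ ε : ℝ} {x y : C} (g : G)
    (h : (x, y) ∈ auxW G K r₀ ε) : (g • x, g • y) ∈ auxW G K r₀ ε := by
  obtain ⟨g', hg'⟩ := mem_auxW.1 h
  refine mem_auxW.2 ⟨g * g', ?_⟩
  simpa [mul_smul] using hg'

private lemma auxW_comp {K : Set C} {r₀ δ δ' : ℝ}
    (hδ : 0 < δ) (hδ' : 0 < δ') (h1 : δ ≤ 2*δ') (h2 : δ' ≤ 2*δ)
    (h3 : δ ≤ r₀/4) (h4 : δ' ≤ r₀/4) {x y z : C}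
    (hxy : (x, y) ∈ auxW G K r₀ δ) (hyz : (y, z) ∈ auxW G K r₀ δ') :
    (x, z) ∈ auxW G K r₀ (δ + δ') := by
  obtain ⟨g, hg⟩ := mem_auxW.1 hxy
  obtain ⟨h, hh⟩ := mem_auxW.1 hyz
  set a := g⁻¹ • x with ha
  set b := g⁻¹ • y with hb
  set c := h⁻¹ • y with hc
  set d := h⁻¹ • z with hd
  set s := g⁻¹ * h with hs
  have esc : s • c = b := by rw [hs, hc, hb, mul_smul, smul_inv_smul]
  have esd : s • d = g⁻¹ • z := by rw [hs, hd, mul_smul, smul_inv_smul]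
  have hab : dist a b < δ := by
    have := hg.2 1 ?_
    · simpa using this
    · simp only [one_smul]
      exact hg.1.imp (fun h' => cthickening_mono (by linarith) K h')
        (fun h' => cthickening_mono (by linarith) K h')
  have haloc : a ∈ cthickening (2*(δ+δ')) K := by
    rcases hg.1 with hl | hl
    · exact cthickening_mono (by linarith) K hl
    · have := aux_cthick_step (by linarith) hδ.le hl (by rw [dist_comm]; exact hab.le)
      exact cthickening_mono (by linarith) K this
  refine mem_auxW.2 ⟨g, ?_, ?_⟩
  · exact Or.inl haloc
  · intro t ht
    have etb : (t * s) • c = t • b := by rw [mul_smul, esc]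
    have etz : (t * s) • d = t • (g⁻¹ • z) := by rw [mul_smul, esd]
    have key : dist (t • a) (t • b) < δ ∧ dist ((t*s) • c) ((t*s) • d) < δ' := by
      rcases ht with htl | htr
      · have d1 : dist (t • a) (t • b) < δ :=
          hg.2 t (Or.inl (cthickening_mono (by linarith) K htl))
        have htb : t • b ∈ cthickening ((r₀ - 2*(δ+δ')) + δ) K :=
          aux_cthick_step (by linarith) hδ.le htl d1.le
        have d2 : dist ((t*s) • c) ((t*s) • d) < δ' := by
          refine hh.2 (t*s) (Or.inl ?_)
          rw [etb]
          exact cthickening_mono (by linarith) K htb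
        exact ⟨d1, d2⟩
      · have htd : (t*s) • d ∈ cthickening (r₀ - 2*(δ+δ')) K := by rw [etz]; exact htr
        have d2 : dist ((t*s) • c) ((t*s) • d) < δ' :=
          hh.2 (t*s) (Or.inr (cthickening_mono (by linarith) K htd))
        have htb : t • b ∈ cthickening ((r₀ - 2*(δ+δ')) + δ') K := by
          rw [← etb]
          exact aux_cthick_step (by linarith) hδ'.le htd (by rw [dist_comm]; exact d2.le)
        have d1 : dist (t • a) (t • b) < δ :=
          hg.2 t (Or.inr (cthickening_mono (by linarith) K htb))
        exact ⟨d1, d2⟩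
    calc dist (t • a) (t • (g⁻¹ • z)) ≤ dist (t • a) (t • b) + dist (t • b) (t • (g⁻¹ • z)) :=
          dist_triangle _ _ _
      _ < δ + δ' := by
          refine add_lt_add key.1 ?_
          rw [← etb, ← etz]
          exact key.2

end Aux


/-- Proposition 5.9: a torsion-free group acting by homeomorphisms, properly
discontinuously and cocompactly, on a locally compact, connected, locally
connected, separable metrizable space `C` admits an equivariant (invariant)
metric on `C` inducing its topology. -/
theorem stmt10 {G C : Type*} [Group G] [tC : TopologicalSpace C] [MulAction G C]
    [LocallyCompactSpace C] [ConnectedSpace C] [LocallyConnectedSpace C]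
    [TopologicalSpace.SeparableSpace C] [TopologicalSpace.MetrizableSpace C]
    (hcont : ∀ g : G, Continuous fun c : C => g • c)
    (hpd : ∀ K L : Set C, IsCompact K → IsCompact L →
      {g : G | (g • K) ∩ L ≠ ∅}.Finite)
    (hcc : ∃ K : Set C, IsCompact K ∧ ⋃ g : G, g • K = Set.univ)
    (htf : ∀ g : G, g ≠ 1 → ¬ IsOfFinOrder g) :
    ∃ m : MetricSpace C,
      m.toUniformSpace.toTopologicalSpace = tC ∧
      ∀ (g : G) (x y : C), m.dist (g • x) (g • y) = m.dist x y := by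
  clear htf
  obtain ⟨m0, hm0⟩ := (⟨TopologicalSpace.metrizableSpaceMetric C, rfl⟩ :
    ∃ m : MetricSpace C, m.toUniformSpace.toTopologicalSpace = tC)
  subst hm0
  letI : MetricSpace C := m0
  obtain ⟨K, hK, hKcov⟩ := hcc
  obtain ⟨K₃, hK₃c, hKint⟩ := exists_compact_superset hK
  obtain ⟨r₀, hr₀pos, hr₀sub⟩ := hK.exists_cthickening_subset_open isOpen_interior hKint
  have hsub : cthickening r₀ K ⊆ K₃ := hr₀sub.trans interior_subset
  set ε₀ : ℝ := r₀ / 8 with hε₀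
  have hε₀pos : 0 < ε₀ := by positivity
  set U : ℕ → Set (C × C) := fun n => auxW G K r₀ (ε₀ / 4 ^ n) with hU
  have hεpos : ∀ n : ℕ, 0 < ε₀ / 4 ^ n := fun n => by positivity
  have hεle : ∀ n : ℕ, ε₀ / 4 ^ n ≤ ε₀ := fun n => by
    apply div_le_self hε₀pos.le
    exact one_le_pow₀ (by norm_num)
  have hεmono : ∀ {m n : ℕ}, m ≤ n → ε₀ / 4 ^ n ≤ ε₀ / 4 ^ m := by
    intro m n h
    have h4 : (4:ℝ)^m ≤ 4^n := by gcongr <;> norm_num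
    exact div_le_div_of_nonneg_left hε₀pos.le (by positivity) h4
  have hUanti : ∀ {m n : ℕ}, m ≤ n → U n ⊆ U m := fun {m n} h => auxW_mono (hεmono h)
  have hUsymm : ∀ (n : ℕ) (x y : C), (x, y) ∈ U n → (y, x) ∈ U n :=
    fun n x y h => auxW_symm h
  have hUinv : ∀ (n : ℕ) (g : G) (x y : C), (x, y) ∈ U n ↔ (g • x, g • y) ∈ U n := by
    intro n g x y
    constructor
    · exact auxW_inv g
    · intro h
      have := auxW_inv g⁻¹ h
      simpa using this
  have hUrefl : ∀ (n : ℕ) (x : C), (x, x) ∈ U n := by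
    intro n x
    have hx : x ∈ ⋃ g : G, g • K := by rw [hKcov]; trivial
    rw [Set.mem_iUnion] at hx
    obtain ⟨g, hg⟩ := hx
    rw [Set.mem_smul_set] at hg
    obtain ⟨k, hkK, rfl⟩ := hg
    refine mem_auxW.2 ⟨g, ?_⟩
    rw [inv_smul_smul]
    exact ⟨Or.inl (self_subset_cthickening K hkK), fun h _ => by simpa using hεpos n⟩
  have hUcomp : ∀ (n : ℕ) (a b c d : C), (a, b) ∈ U (n+1) → (b, c) ∈ U (n+1) →
      (c, d) ∈ U (n+1) → (a, d) ∈ U n := by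
    intro n a b c d h1 h2 h3
    have hepos := hεpos (n+1)
    have heε₀ : ε₀ / 4 ^ (n+1) ≤ ε₀ := hεle (n+1)
    have her : ε₀ = r₀ / 8 := hε₀
    set e := ε₀ / 4 ^ (n+1) with he
    have hac : (a, c) ∈ auxW G K r₀ (e + e) :=
      auxW_comp hepos hepos (by linarith) (by linarith) (by linarith) (by linarith) h1 h2
    have had : (a, d) ∈ auxW G K r₀ ((e + e) + e) :=
      auxW_comp (by linarith) hepos (by linarith) (by linarith) (by linarith) (by linarith)
        hac h3
    have h4e : ε₀ / 4 ^ n = 4 * e := by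
      rw [he, pow_succ]
      field_simp
    have h3e : (e + e) + e ≤ ε₀ / 4 ^ n := by rw [h4e]; linarith
    exact auxW_mono h3e had
  have hUmem : ∀ (x : C) (n : ℕ), {y | (x, y) ∈ U n} ∈ nhds x := by
    intro x n
    have hx : x ∈ ⋃ g : G, g • K := by rw [hKcov]; trivial
    rw [Set.mem_iUnion] at hx
    obtain ⟨g, hg⟩ := hx
    rw [Set.mem_smul_set] at hg
    obtain ⟨k, hkK, rfl⟩ := hg
    refine auxW_mem_nhds hK₃c hcont hpd hsub (hεpos n) ?_ hkK rfl
    have := hεle n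
    rw [hε₀] at this
    linarith
  have hUshrink : ∀ (x : C) (s : Set C), s ∈ nhds x → ∃ n : ℕ, {y | (x, y) ∈ U n} ⊆ s := by
    intro x s hs
    obtain ⟨εb, hεbpos, hεb⟩ := auxW_shrink (G := G) (K := K) hK₃c hcont hpd hsub hr₀pos hs
    obtain ⟨n, hn⟩ := exists_pow_lt_of_lt_one (div_pos hεbpos hε₀pos)
      (by norm_num : (4:ℝ)⁻¹ < 1)
    refine ⟨n, hεb _ (hεpos n) ?_⟩
    have h1 : ε₀ / 4 ^ n = ε₀ * (4⁻¹) ^ n := by rw [div_eq_mul_inv, inv_pow]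
    rw [h1]
    calc ε₀ * (4⁻¹ : ℝ) ^ n ≤ ε₀ * (εb / ε₀) :=
          mul_le_mul_of_nonneg_left hn.le hε₀pos.le
      _ = εb := by field_simp
  classical
  set dd : ℕ → C → C → ℝ≥0 := fun n x y => if (x, y) ∈ U n then ((2:ℝ≥0)⁻¹) ^ n else 1
    with hdd
  set D : C → C → ℝ≥0 := fun x y => ⨅ n : ℕ, dd n x y with hD
  have hdd_le_one : ∀ (n : ℕ) (x y : C), dd n x y ≤ 1 := by
    intro n x y
    rw [hdd]
    dsimp only
    split
    · exact pow_le_one₀ zero_le (by norm_num)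
    · exact le_refl 1
  have hD_le : ∀ (n : ℕ) (x y : C), (x, y) ∈ U n → D x y ≤ (2:ℝ≥0)⁻¹ ^ n := by
    intro n x y h
    refine (ciInf_le (OrderBot.bddBelow _) n).trans ?_
    rw [hdd]
    dsimp only
    rw [if_pos h]
  have hD_le_one : ∀ x y : C, D x y ≤ 1 :=
    fun x y => (ciInf_le (OrderBot.bddBelow _) 0).trans (hdd_le_one 0 x y)
  have hD_lt : ∀ (n : ℕ) (x y : C), D x y < (2:ℝ≥0)⁻¹ ^ n → (x, y) ∈ U (n+1) := by
    intro n x y h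
    obtain ⟨m, hm⟩ := exists_lt_of_ciInf_lt h
    rw [hdd] at hm
    dsimp only at hm
    split_ifs at hm with hmem
    · have hnm : n < m := by
        by_contra hc
        push_neg at hc
        exact absurd hm (not_lt.2 (pow_le_pow_of_le_one zero_le (by norm_num) hc))
      exact hUanti (Nat.succ_le_of_lt hnm) hmem
    · exact absurd hm (not_lt.2 (pow_le_one₀ zero_le (by norm_num)))
  have hD_zero_of : ∀ x y : C, (∀ n : ℕ, D x y ≤ (2:ℝ≥0)⁻¹ ^ n) → D x y = 0 := by
    intro x y h
    by_contra h0
    have hpos : 0 < D x y := zero_le.lt_of_ne (Ne.symm h0)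
    obtain ⟨n, hn⟩ := NNReal.exists_pow_lt_of_lt_one hpos (by rw [← NNReal.coe_lt_coe]; push_cast; norm_num : (2:ℝ≥0)⁻¹ < 1)
    exact absurd (h n) (not_le.2 hn)
  have hD_self : ∀ x : C, D x x = 0 :=
    fun x => hD_zero_of x x fun n => hD_le n x x (hUrefl n x)
  have hD_comm : ∀ x y : C, D x y = D y x := by
    intro x y
    rw [hD]
    dsimp only
    congr 1
    funext n
    rw [hdd]
    dsimp only
    congr 1
    exact propext ⟨hUsymm n x y, hUsymm n y x⟩
  have hD_inv : ∀ (g : G) (x y : C), D (g • x) (g • y) = D x y := by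
    intro g x y
    rw [hD]
    dsimp only
    congr 1
    funext n
    rw [hdd]
    dsimp only
    congr 1
    exact propext (hUinv n g x y).symm
  have hchain : ∀ a b c d : C, D a d ≤ 2 * max (D a b) (max (D b c) (D c d)) := by
    intro a b c d
    set M := max (D a b) (max (D b c) (D c d)) with hM
    have hab : D a b ≤ M := le_max_left _ _
    have hbc : D b c ≤ M := le_trans (le_max_left _ _) (le_max_right _ _)
    have hcd : D c d ≤ M := le_trans (le_max_right _ _) (le_max_right _ _)
    rcases eq_zero_or_pos M with hM0 | hMpos
    · have hz : ∀ p q : C, D p q = 0 → ∀ n : ℕ, (p, q) ∈ U n := by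
        intro p q h n
        refine hUanti (Nat.le_succ n) (hD_lt n p q ?_)
        rw [h]
        exact pow_pos (by positivity) n
      have h0ab : D a b = 0 := le_antisymm (hM0 ▸ hab) zero_le
      have h0bc : D b c = 0 := le_antisymm (hM0 ▸ hbc) zero_le
      have h0cd : D c d = 0 := le_antisymm (hM0 ▸ hcd) zero_le
      have hall : ∀ n : ℕ, (a, d) ∈ U n := fun n =>
        hUcomp n a b c d (hz _ _ h0ab (n+1)) (hz _ _ h0bc (n+1)) (hz _ _ h0cd (n+1))
      rw [hM0, mul_zero, hD_zero_of a d (fun n => hD_le n a d (hall n))]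
    · by_cases hM2 : (2:ℝ≥0)⁻¹ ≤ M
      · calc D a d ≤ 1 := hD_le_one a d
          _ = 2 * 2⁻¹ := by
              rw [← NNReal.coe_inj]
              push_cast
              norm_num
          _ ≤ 2 * M := mul_le_mul_right hM2 2
      · push_neg at hM2
        have hex : ∃ k : ℕ, (2:ℝ≥0)⁻¹ ^ (k+1) ≤ M := by
          obtain ⟨k, hk⟩ := NNReal.exists_pow_lt_of_lt_one hMpos
            (by rw [← NNReal.coe_lt_coe]; push_cast; norm_num : (2:ℝ≥0)⁻¹ < 1)
          exact ⟨k, le_trans (pow_le_pow_of_le_one zero_le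
            (by rw [← NNReal.coe_le_coe]; push_cast; norm_num)
            (Nat.le_succ k)) hk.le⟩
        set n := Nat.find hex with hn
        have hn1 : (2:ℝ≥0)⁻¹ ^ (n+1) ≤ M := Nat.find_spec hex
        have hn2 : M < (2:ℝ≥0)⁻¹ ^ n := by
          rcases Nat.eq_zero_or_pos n with h0 | hposn
          · rw [h0, pow_zero]
            exact hM2.trans_le (by rw [← NNReal.coe_le_coe]; push_cast; norm_num)
          · obtain ⟨k, hk⟩ := Nat.exists_eq_succ_of_ne_zero hposn.ne'
            have hmin := Nat.find_min hex (m := k) (by omega)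
            rw [hk]
            exact not_le.1 hmin
        have m1 : (a, b) ∈ U (n+1) := hD_lt n a b (hab.trans_lt hn2)
        have m2 : (b, c) ∈ U (n+1) := hD_lt n b c (hbc.trans_lt hn2)
        have m3 : (c, d) ∈ U (n+1) := hD_lt n c d (hcd.trans_lt hn2)
        calc D a d ≤ (2:ℝ≥0)⁻¹ ^ n := hD_le n a d (hUcomp n a b c d m1 m2 m3)
          _ = 2 * (2:ℝ≥0)⁻¹ ^ (n+1) := by
              rw [← NNReal.coe_inj]
              push_cast
              rw [pow_succ]
              ring
          _ ≤ 2 * M := mul_le_mul_right hn1 2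
  have hPle : ∀ x y : C,
      @dist C (@PseudoMetricSpace.toDist C (PseudoMetricSpace.ofPreNNDist D hD_self hD_comm)) x y
        ≤ (D x y : ℝ) :=
    fun x y => PseudoMetricSpace.dist_ofPreNNDist_le D hD_self hD_comm x y
  have hPge : ∀ x y : C, (D x y : ℝ) ≤ 2 *
      @dist C (@PseudoMetricSpace.toDist C (PseudoMetricSpace.ofPreNNDist D hD_self hD_comm)) x y :=
    fun x y => PseudoMetricSpace.le_two_mul_dist_ofPreNNDist D hD_self hD_comm hchain x y
  have hPinv : ∀ (g : G) (x y : C),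
      @dist C (@PseudoMetricSpace.toDist C (PseudoMetricSpace.ofPreNNDist D hD_self hD_comm))
        (g • x) (g • y) =
      @dist C (@PseudoMetricSpace.toDist C (PseudoMetricSpace.ofPreNNDist D hD_self hD_comm))
        x y := by
    have hkey : ∀ (g : G) (x y : C),
        (⨅ l : List C, (((g • x) :: l).zipWith D (l ++ [g • y])).sum : ℝ≥0) ≤
        ⨅ l : List C, ((x :: l).zipWith D (l ++ [y])).sum := by
      intro g x y
      refine le_ciInf fun l => ?_
      refine (ciInf_le (OrderBot.bddBelow _) (l.map (g • ·))).trans (le_of_eq ?_)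
      have h1 : ((g • x) :: (l.map (g • ·))) = (x :: l).map (g • ·) := rfl
      have h2 : (l.map (g • ·)) ++ [g • y] = (l ++ [y]).map (g • ·) := by simp
      rw [h1, h2, List.zipWith_map]
      have h3 : (fun (a : C) (b : C) => D (g • a) (g • b)) = D := by
        funext a b
        exact hD_inv g a b
      rw [h3]
    intro g x y
    rw [PseudoMetricSpace.dist_ofPreNNDist, PseudoMetricSpace.dist_ofPreNNDist]
    refine congrArg _ (le_antisymm (hkey g x y) ?_)
    have := hkey g⁻¹ (g • x) (g • y)
    simpa using this
  have hcast : ∀ n : ℕ, (((2:ℝ≥0)⁻¹ ^ n : ℝ≥0) : ℝ) = (2:ℝ)⁻¹ ^ n := by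
    intro n
    push_cast
    norm_num
  have hPnhds : ∀ x : C,
      @nhds C (PseudoMetricSpace.ofPreNNDist D hD_self hD_comm).toUniformSpace.toTopologicalSpace x
        = nhds x := by
    intro x
    apply Filter.ext
    intro s
    constructor
    · intro hs
      obtain ⟨ε, hεp, hεsub⟩ :=
        (@Metric.mem_nhds_iff C (PseudoMetricSpace.ofPreNNDist D hD_self hD_comm) _ _).1 hs
      obtain ⟨n, hn⟩ := exists_pow_lt_of_lt_one hεp (by norm_num : (2:ℝ)⁻¹ < 1)
      refine Filter.mem_of_superset (hUmem x n) fun y hy => hεsub ?_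
      rw [@Metric.mem_ball C (PseudoMetricSpace.ofPreNNDist D hD_self hD_comm)]
      rw [@dist_comm C (PseudoMetricSpace.ofPreNNDist D hD_self hD_comm)]
      have h2 := hPle x y
      have h3 : (D x y : ℝ) ≤ (2:ℝ)⁻¹ ^ n := by
        calc (D x y : ℝ) ≤ (((2:ℝ≥0)⁻¹ ^ n : ℝ≥0) : ℝ) := NNReal.coe_le_coe.2 (hD_le n x y hy)
          _ = (2:ℝ)⁻¹ ^ n := hcast n
      linarith
    · intro hs
      obtain ⟨n, hn⟩ := hUshrink x s hs
      refine (@Metric.mem_nhds_iff C (PseudoMetricSpace.ofPreNNDist D hD_self hD_comm) _ _).2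
        ⟨(2:ℝ)⁻¹ ^ (n+2), by positivity, fun y hy => hn ?_⟩
      rw [@Metric.mem_ball C (PseudoMetricSpace.ofPreNNDist D hD_self hD_comm)] at hy
      rw [@dist_comm C (PseudoMetricSpace.ofPreNNDist D hD_self hD_comm)] at hy
      have h2 := hPge x y
      have h4 : (D x y : ℝ) < (2:ℝ)⁻¹ ^ (n+1) := by
        have h5 : 2 * (2:ℝ)⁻¹ ^ (n+2) = (2:ℝ)⁻¹ ^ (n+1) := by
          rw [pow_succ]
          ring
        nlinarith
      have hD2 : D x y < (2:ℝ≥0)⁻¹ ^ (n+1) := by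
        rw [← NNReal.coe_lt_coe, hcast]
        exact h4
      exact hUanti (by omega) (hD_lt (n+1) x y hD2)
  have htop : (PseudoMetricSpace.ofPreNNDist D hD_self hD_comm).toUniformSpace.toTopologicalSpace
      = m0.toUniformSpace.toTopologicalSpace :=
    TopologicalSpace.ext_nhds hPnhds
  letI P' : PseudoMetricSpace C :=
    (PseudoMetricSpace.ofPreNNDist D hD_self hD_comm).replaceTopology htop.symm
  have htop' : P'.toUniformSpace.toTopologicalSpace = m0.toUniformSpace.toTopologicalSpace := rfl
  haveI hT0 : @T0Space C P'.toUniformSpace.toTopologicalSpace := by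
    rw [htop']
    infer_instance
  refine ⟨@MetricSpace.ofT0PseudoMetricSpace C P' hT0, ?_, ?_⟩
  · exact htop'
  · intro g x y
    exact hPinv g x y
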